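/- Let (R, Ad_Γ) be a graded von Neumann algebra with R commutative. Then there exists a projection P ∈ R such that: (i) every projection q ∈ R with q ≤ P satisfies ΓqΓ = q (i.e., q is even), and (ii) there exists a projection Q ∈ R with ΓQΓ = (I - P) - Q. -/

import Mathlib

noncomputable section

variable {H : Type*} [NormedAddCommGroup H] [InnerProductSpace ℂ H] [CompleteSpace H]

/-- A self-adjoint unitary operator. -/
def IsSAU (Γ : H →L[ℂ] H) : Prop := star Γ = Γ ∧ Γ * Γ = 1

/-- The even part of a graded set of operators. -/
def evenPart (R : Set (H →L[ℂ] H)) (Γ : H →L[ℂ] H) : Set (H →L[ℂ] H) :=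
  {x | x ∈ R ∧ Γ * x * Γ = x}

/-- The odd part of a graded set of operators. -/
def oddPart (R : Set (H →L[ℂ] H)) (Γ : H →L[ℂ] H) : Set (H →L[ℂ] H) :=
  {x | x ∈ R ∧ Γ * x * Γ = -x}

/-- The center of a set of operators. -/
def centerSet (R : Set (H →L[ℂ] H)) : Set (H →L[ℂ] H) :=
  {x | x ∈ R ∧ ∀ y ∈ R, x * y = y * x}

/-- An (orthogonal) projection operator. -/
def IsProjOp (e : H →L[ℂ] H) : Prop := e * e = e ∧ star e = e

/-- `e` is a subprojection of `f`. -/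
def SubProj (e f : H →L[ℂ] H) : Prop := e * f = e ∧ f * e = e

/-- Murray–von Neumann equivalence of projections relative to `M`. -/
def MvNEquiv (M : Set (H →L[ℂ] H)) (e f : H →L[ℂ] H) : Prop :=
  ∃ v ∈ M, star v * v = e ∧ v * star v = f

/-- `e` is finite relative to `M`. -/
def FiniteProj (M : Set (H →L[ℂ] H)) (e : H →L[ℂ] H) : Prop :=
  ∀ f ∈ M, IsProjOp f → SubProj f e → MvNEquiv M f e → f = e

/-- `e` is an abelian projection relative to `M`: the corner `eMe` is commutative. -/
def AbelianProj (M : Set (H →L[ℂ] H)) (e : H →L[ℂ] H) : Prop :=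
  ∀ x ∈ M, ∀ y ∈ M, (e * x * e) * (e * y * e) = (e * y * e) * (e * x * e)

/-- A von Neumann algebra (given as a set) is of type III: no nonzero finite projections. -/
def TypeIII (M : Set (H →L[ℂ] H)) : Prop :=
  ∀ e ∈ M, IsProjOp e → FiniteProj M e → e = 0

/-- Type II₁ : finite with no nonzero abelian projections. -/
def TypeII1 (M : Set (H →L[ℂ] H)) : Prop :=
  FiniteProj M 1 ∧ ∀ e ∈ M, IsProjOp e → AbelianProj M e → e = 0

/-- Type I_n : the identity is the sum of `n` orthogonal, mutually equivalent
abelian projections. -/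
def TypeI (M : Set (H →L[ℂ] H)) (n : Cardinal) : Prop :=
  ∃ (ι : Type) (E : ι → H →L[ℂ] H), Cardinal.mk ι = n ∧
    (∀ a, E a ∈ M ∧ IsProjOp (E a) ∧ AbelianProj M (E a)) ∧
    (Pairwise fun a b => E a * E b = 0) ∧
    (∀ a b, MvNEquiv M (E a) (E b)) ∧
    (∀ v : H, HasSum (fun a => (E a) v) v)

/-- The scalar operators. -/
def scalarOps (H : Type*) [NormedAddCommGroup H] [InnerProductSpace ℂ H] [CompleteSpace H] :
    Set (H →L[ℂ] H) := Set.range fun c : ℂ => c • (1 : H →L[ℂ] H)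

/-- `M` is a factor. -/
def IsFactor (M : Set (H →L[ℂ] H)) : Prop := centerSet M = scalarOps H

/-- `R` is graded by the self-adjoint unitary `Γ`. -/
def GradedBy (R : Set (H →L[ℂ] H)) (Γ : H →L[ℂ] H) : Prop :=
  IsSAU Γ ∧ ∀ x ∈ R, Γ * x * Γ ∈ R

/-- The von Neumann algebra generated by a (star-closed, unital) set:
its double commutant. -/
def genVN (S : Set (H →L[ℂ] H)) : Set (H →L[ℂ] H) :=
  Set.centralizer (Set.centralizer S)

/-- `c` is the central support of `T` in `M`. -/
def IsCentralSupport (M : Set (H →L[ℂ] H)) (T c : H →L[ℂ] H) : Prop :=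
  c ∈ centerSet M ∧ IsProjOp c ∧ c * T = T ∧
    ∀ d ∈ centerSet M, IsProjOp d → d * T = T → c * d = c

local notation "⟪" x ", " y "⟫" => @inner ℂ _ _ x y

lemma aux_sa_inner {p : H →L[ℂ] H} (hp : star p = p) (x y : H) : ⟪p x, y⟫ = ⟪x, p y⟫ := by
  conv_lhs => rw [← hp, ContinuousLinearMap.star_eq_adjoint,
    ContinuousLinearMap.adjoint_inner_left]

lemma aux_exists_sum_proj (R : VonNeumannAlgebra H) {ι : Type*} (E : ι → H →L[ℂ] H)
    (hmem : ∀ i, E i ∈ R) (hproj : ∀ i, E i * E i = E i ∧ star (E i) = E i)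
    (horth : ∀ i j, i ≠ j → E i * E j = 0) :
    ∃ S : H →L[ℂ] H, S ∈ R ∧ (S * S = S ∧ star S = S) ∧
      ∀ v : H, HasSum (fun i => E i v) (S v) := by
  classical
  have hsa : ∀ (i : ι) (x y : H), ⟪E i x, y⟫ = ⟪x, E i y⟫ := fun i => aux_sa_inner (hproj i).2
  have happ : ∀ (i : ι) (v : H), E i (E i v) = E i v := by
    intro i v
    conv_lhs => rw [← ContinuousLinearMap.mul_apply, (hproj i).1]
  have happ0 : ∀ (i j : ι) (v : H), i ≠ j → E i (E j v) = 0 := by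
    intro i j v hij
    rw [← ContinuousLinearMap.mul_apply, horth i j hij, ContinuousLinearMap.zero_apply]
  -- inner product of partial sums
  have hdiag : ∀ (v : H) (t : Finset ι),
      ⟪∑ i ∈ t, E i v, ∑ i ∈ t, E i v⟫ = ∑ i ∈ t, ⟪E i v, E i v⟫ := by
    intro v t
    rw [sum_inner]
    refine Finset.sum_congr rfl fun i hi => ?_
    rw [inner_sum]
    refine Finset.sum_eq_single i (fun j hj hji => ?_) (fun h => absurd hi h)
    rw [hsa, happ0 i j v (Ne.symm hji), inner_zero_right]
  have hvw : ∀ (v : H) (t : Finset ι),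
      ⟪∑ i ∈ t, E i v, ∑ i ∈ t, E i v⟫ = ⟪v, ∑ i ∈ t, E i v⟫ := by
    intro v t
    rw [hdiag, inner_sum]
    exact Finset.sum_congr rfl fun i _ => by rw [hsa, happ]
  have hnorm_le : ∀ (v : H) (t : Finset ι), ‖∑ i ∈ t, E i v‖ ≤ ‖v‖ := by
    intro v t
    set w := ∑ i ∈ t, E i v with hw
    rcases eq_or_ne w 0 with h | h
    · simp [h]
    · have h1 : ‖w‖ ^ 2 = RCLike.re ⟪w, w⟫ := (inner_self_eq_norm_sq (𝕜 := ℂ) w).symm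
      have h2 : RCLike.re ⟪w, w⟫ ≤ ‖v‖ * ‖w‖ := by
        rw [hvw v t]; exact re_inner_le_norm (𝕜 := ℂ) v w
      have h3 : ‖w‖ * ‖w‖ ≤ ‖v‖ * ‖w‖ := by nlinarith [h1, h2]
      exact le_of_mul_le_mul_right h3 (norm_pos_iff.mpr h)
  have hsumsq : ∀ (v : H) (t : Finset ι),
      ∑ i ∈ t, ‖E i v‖ ^ 2 = ‖∑ i ∈ t, E i v‖ ^ 2 := by
    intro v t
    have := hdiag v t
    have h1 : RCLike.re ⟪∑ i ∈ t, E i v, ∑ i ∈ t, E i v⟫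
        = ∑ i ∈ t, RCLike.re ⟪E i v, E i v⟫ := by rw [this, map_sum]
    rw [inner_self_eq_norm_sq (𝕜 := ℂ)] at h1
    rw [h1]
    exact Finset.sum_congr rfl fun i _ => (inner_self_eq_norm_sq (𝕜 := ℂ) _).symm
  have hbound : ∀ (v : H) (t : Finset ι), ∑ i ∈ t, ‖E i v‖ ^ 2 ≤ ‖v‖ ^ 2 := by
    intro v t
    rw [hsumsq]
    exact pow_le_pow_left₀ (norm_nonneg _) (hnorm_le v t) 2
  have hsq_summable : ∀ v : H, Summable fun i => ‖E i v‖ ^ 2 := fun v =>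
    summable_of_sum_le (fun i => sq_nonneg _) (hbound v)
  have hsummable : ∀ v : H, Summable fun i => E i v := by
    intro v
    rw [summable_iff_vanishing_norm]
    intro ε hε
    obtain ⟨s, hs⟩ := summable_iff_vanishing_norm.mp (hsq_summable v) (ε ^ 2) (by positivity)
    refine ⟨s, fun t ht => ?_⟩
    have h1 : ∑ i ∈ t, ‖E i v‖ ^ 2 < ε ^ 2 := by
      have := hs t ht
      calc ∑ i ∈ t, ‖E i v‖ ^ 2 ≤ ‖∑ i ∈ t, ‖E i v‖ ^ 2‖ := le_abs_self _
      _ < ε ^ 2 := this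
    have h2 : ‖∑ i ∈ t, E i v‖ ^ 2 < ε ^ 2 := by rw [← hsumsq]; exact h1
    exact lt_of_pow_lt_pow_left₀ 2 (le_of_lt hε) h2
  -- the sum as a linear map
  let L : H →ₗ[ℂ] H :=
    { toFun := fun v => ∑' i, E i v
      map_add' := by
        intro v w
        have h : HasSum (fun i => E i (v + w)) (∑' i, E i v + ∑' i, E i w) := by
          simpa [map_add] using (hsummable v).hasSum.add (hsummable w).hasSum
        exact h.tsum_eq
      map_smul' := by
        intro c v
        have h : HasSum (fun i => E i (c • v)) (c • ∑' i, E i v) := by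
          simpa [map_smul] using (hsummable v).hasSum.const_smul c
        exact h.tsum_eq }
  have hLnorm : ∀ v : H, ‖L v‖ ≤ 1 * ‖v‖ := by
    intro v
    rw [one_mul]
    have h1 : HasSum (fun i => E i v) (L v) := (hsummable v).hasSum
    exact le_of_tendsto' (h1.norm) fun t => hnorm_le v t
  let S : H →L[ℂ] H := L.mkContinuous 1 hLnorm
  have hS : ∀ v : H, HasSum (fun i => E i v) (S v) := fun v => (hsummable v).hasSum
  have hSid : S * S = S := by
    ext v
    rw [ContinuousLinearMap.mul_apply]
    have h1 : HasSum (fun i => E i (S v)) (S (S v)) := hS (S v)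
    have h2 : ∀ i, E i (S v) = E i v := by
      intro i
      have h3 : HasSum (fun j => E i (E j v)) (E i (S v)) := (hS v).mapL (E i)
      have h4 : HasSum (fun j => E i (E j v)) (E i (E i v)) :=
        hasSum_single i fun j hj => happ0 i j v (Ne.symm hj)
      rw [h3.unique h4, happ]
    simp only [h2] at h1
    exact h1.unique (hS v)
  have hSsa : star S = S := by
    have key : ∀ x y : H, ⟪S x, y⟫ = ⟪x, S y⟫ := by
      intro x y
      have h1 : HasSum (fun i => ⟪x, E i y⟫) ⟪x, S y⟫ := (hS y).mapL (innerSL ℂ x)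
      have h2 : HasSum (fun i => ⟪y, E i x⟫) ⟪y, S x⟫ := (hS x).mapL (innerSL ℂ y)
      have h3 : HasSum (fun i => star ⟪y, E i x⟫) (star ⟪y, S x⟫) := h2.star
      have h4 : ∀ i, star ⟪y, E i x⟫ = ⟪x, E i y⟫ := by
        intro i
        rw [← hsa i x y]
        exact inner_conj_symm _ _
      simp only [h4] at h3
      have h5 : star ⟪y, S x⟫ = ⟪x, S y⟫ := h3.unique h1
      rw [← h5]
      exact (inner_conj_symm _ _).symm
    have h6 : S = ContinuousLinearMap.adjoint S :=
      (ContinuousLinearMap.eq_adjoint_iff S S).mpr key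
    rw [ContinuousLinearMap.star_eq_adjoint, ← h6]
  have hSmem : S ∈ R := by
    have h0 : S ∈ Set.centralizer (Set.centralizer (R : Set (H →L[ℂ] H))) := by
      intro z hz
      ext v
      rw [ContinuousLinearMap.mul_apply, ContinuousLinearMap.mul_apply]
      have h1 : HasSum (fun i => z (E i v)) (z (S v)) := (hS v).mapL z
      have h2 : ∀ i, z (E i v) = E i (z v) := by
        intro i
        have h3 := hz (E i) (hmem i)
        calc z (E i v) = (z * E i) v := rfl
        _ = (E i * z) v := by rw [← h3]
        _ = E i (z v) := rfl
      simp only [h2] at h1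
      exact (h1.unique (hS (z v))) ▸ rfl
    rwa [R.centralizer_centralizer] at h0
  exact ⟨S, hSmem, ⟨hSid, hSsa⟩, hS⟩

section AuxIdem
variable {A : Type*} [Ring A] {a b : A}

lemma aux_idem_diff (ha : a * a = a) (hb : b * b = b)
    (hab : a * b = b * a) : (a - a * b) * (a - a * b) = a - a * b := by
  have hA : a * (a * b) = a * b := by rw [← mul_assoc, ha]
  have hB : a * (b * a) = a * b := by rw [← hab, hA]
  have hbab : b * (a * b) = a * b := by rw [← mul_assoc, ← hab, mul_assoc, hb]
  have h1 : (a - a * b) * (a - a * b)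
      = a * a - a * (a * b) - a * (b * a) + a * (b * (a * b)) := by noncomm_ring
  rw [h1, ha, hA, hB, hbab, hA]
  abel

lemma aux_idem_diff2 (ha : a * a = a) (hb : b * b = b)
    (hab : a * b = b * a) : (a - a * b) * (b - a * b) = 0 := by
  have hA : a * (a * b) = a * b := by rw [← mul_assoc, ha]
  have hbab : b * (a * b) = a * b := by rw [← mul_assoc, ← hab, mul_assoc, hb]
  have h1 : (a - a * b) * (b - a * b)
      = a * b - a * (a * b) - a * (b * b) + a * (b * (a * b)) := by noncomm_ring
  rw [h1, hA, hb, hbab, hA]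
  abel

end AuxIdem

/-- in a commutative graded von Neumann algebra there is a central
projection `P` below which every projection is even, and a projection `Q` with
`ΓQΓ = (1 - P) - Q`. -/
theorem stmt_12 (R : VonNeumannAlgebra H) (Γ : H →L[ℂ] H) (hΓ : IsSAU Γ)
    (hinv : ∀ x ∈ R, Γ * x * Γ ∈ R)
    (hcomm : ∀ x ∈ R, ∀ y ∈ R, x * y = y * x) :
    ∃ P ∈ (R : Set (H →L[ℂ] H)), IsProjOp P ∧
      (∀ q ∈ (R : Set (H →L[ℂ] H)), IsProjOp q → SubProj q P → Γ * q * Γ = q) ∧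
      ∃ Q ∈ (R : Set (H →L[ℂ] H)), IsProjOp Q ∧ Γ * Q * Γ = (1 - P) - Q := by
    classical
  obtain ⟨hΓs, hΓ2⟩ := hΓ
  have hα_mul : ∀ x y : H →L[ℂ] H, Γ * (x * y) * Γ = (Γ * x * Γ) * (Γ * y * Γ) := by
    intro x y
    calc Γ * (x * y) * Γ = Γ * x * (Γ * Γ) * y * Γ := by rw [hΓ2]; noncomm_ring
    _ = (Γ * x * Γ) * (Γ * y * Γ) := by noncomm_ring
  have hα_invol : ∀ x : H →L[ℂ] H, Γ * (Γ * x * Γ) * Γ = x := by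
    intro x
    calc Γ * (Γ * x * Γ) * Γ = (Γ * Γ) * x * (Γ * Γ) := by noncomm_ring
    _ = x := by rw [hΓ2]; simp
  have hα_star : ∀ x : H →L[ℂ] H, star x = x → star (Γ * x * Γ) = Γ * x * Γ := by
    intro x hx
    simp [star_mul, hΓs, hx, mul_assoc]
  have hα_zero : Γ * (0 : H →L[ℂ] H) * Γ = 0 := by simp
  -- the Zorn family
  set 𝒜 : Set (Set (H →L[ℂ] H)) := {s | s ⊆ (R : Set (H →L[ℂ] H)) ∧
    (∀ q ∈ s, IsProjOp q) ∧
    (∀ q ∈ s, ∀ q' ∈ s, q * (Γ * q' * Γ) = 0) ∧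
    (∀ q ∈ s, ∀ q' ∈ s, q ≠ q' → q * q' = 0)} with h𝒜
  obtain ⟨m, hmax⟩ := zorn_subset 𝒜 (by
    intro c hc hchain
    refine ⟨⋃₀ c, ⟨?_, ?_, ?_, ?_⟩, fun s hs => Set.subset_sUnion_of_mem hs⟩
    · rintro q ⟨s, hs, hq⟩
      exact (hc hs).1 hq
    · rintro q ⟨s, hs, hq⟩
      exact (hc hs).2.1 q hq
    · rintro q ⟨s, hs, hq⟩ q' ⟨s', hs', hq'⟩
      rcases hchain.total hs hs' with h | h
      · exact (hc hs').2.2.1 q (h hq) q' hq'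
      · exact (hc hs).2.2.1 q hq q' (h hq')
    · rintro q ⟨s, hs, hq⟩ q' ⟨s', hs', hq'⟩ hne
      rcases hchain.total hs hs' with h | h
      · exact (hc hs').2.2.2 q (h hq) q' hq' hne
      · exact (hc hs).2.2.2 q hq q' (h hq') hne)
  obtain ⟨hmR, hmproj, hmort, hmort'⟩ := hmax.prop
  -- the sum of the maximal family
  obtain ⟨Q, hQmem, ⟨hQid, hQsa⟩, hQsum⟩ := aux_exists_sum_proj R
    (fun q : ↥m => (q : H →L[ℂ] H)) (fun q => hmR q.2)
    (fun q => ⟨(hmproj q q.2).1, (hmproj q q.2).2⟩)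
    (fun i j hij => hmort' i i.2 j j.2 (fun h => hij (Subtype.ext h)))
  -- key operator identities
  have lemA : ∀ q' ∈ m, Q * q' = q' := by
    intro q' hq'
    ext v
    rw [ContinuousLinearMap.mul_apply]
    have h1 : HasSum (fun q : ↥m => (q : H →L[ℂ] H) (q' v)) (Q (q' v)) := hQsum (q' v)
    have h2 : HasSum (fun q : ↥m => (q : H →L[ℂ] H) (q' v)) (q' v) := by
      have h3 := hasSum_single (f := fun q : ↥m => (q : H →L[ℂ] H) (q' v)) ⟨q', hq'⟩
        (fun q hq => by
          have h4 : (q : H →L[ℂ] H) * q' = 0 :=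
            hmort' q q.2 q' hq' (fun h => hq (Subtype.ext h))
          calc (q : H →L[ℂ] H) (q' v) = ((q : H →L[ℂ] H) * q') v := rfl
          _ = 0 := by rw [h4]; rfl)
      have h5 : q' (q' v) = q' v := by
        conv_lhs => rw [← ContinuousLinearMap.mul_apply, (hmproj q' hq').1]
      simpa [h5] using h3
    exact h1.unique h2
  have lemB : ∀ q' ∈ m, Q * (Γ * q' * Γ) = 0 := by
    intro q' hq'
    ext v
    rw [ContinuousLinearMap.mul_apply, ContinuousLinearMap.zero_apply]
    have h1 : HasSum (fun q : ↥m => (q : H →L[ℂ] H) ((Γ * q' * Γ) v)) (Q ((Γ * q' * Γ) v)) :=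
      hQsum _
    have h2 : ∀ q : ↥m, (q : H →L[ℂ] H) ((Γ * q' * Γ) v) = 0 := by
      intro q
      calc (q : H →L[ℂ] H) ((Γ * q' * Γ) v) = ((q : H →L[ℂ] H) * (Γ * q' * Γ)) v := rfl
      _ = 0 := by rw [hmort q q.2 q' hq']; rfl
    simp only [h2] at h1
    exact h1.unique hasSum_zero
  set Q' : H →L[ℂ] H := Γ * Q * Γ with hQ'def
  have hQ'mem : Q' ∈ R := hinv Q hQmem
  have hQ'sa : star Q' = Q' := hα_star Q hQsa
  have hQ'id : Q' * Q' = Q' := by rw [hQ'def, ← hα_mul, hQid]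
  have hQQ' : Q * Q' = 0 := by
    ext v
    rw [ContinuousLinearMap.mul_apply, ContinuousLinearMap.zero_apply]
    have h1 : HasSum (fun q : ↥m => Q ((Γ * ((q : H →L[ℂ] H)) * Γ) v)) (Q (Q' v)) := by
      have h2 : HasSum (fun q : ↥m => (q : H →L[ℂ] H) (Γ v)) (Q (Γ v)) := hQsum (Γ v)
      have h3 : HasSum (fun q : ↥m => Γ ((q : H →L[ℂ] H) (Γ v))) (Γ (Q (Γ v))) := h2.mapL Γ
      have h4 : HasSum (fun q : ↥m => Q (Γ ((q : H →L[ℂ] H) (Γ v)))) (Q (Γ (Q (Γ v)))) :=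
        h3.mapL Q
      have heq : (fun q : ↥m => Q ((Γ * ((q : H →L[ℂ] H)) * Γ) v))
          = fun q : ↥m => Q (Γ ((q : H →L[ℂ] H) (Γ v))) := by
        funext q
        simp [ContinuousLinearMap.mul_apply]
      have heq2 : Q (Q' v) = Q (Γ (Q (Γ v))) := by
        simp [hQ'def, ContinuousLinearMap.mul_apply]
      rw [heq, heq2]
      exact h4
    have h5 : ∀ q : ↥m, Q ((Γ * ((q : H →L[ℂ] H)) * Γ) v) = 0 := by
      intro q
      calc Q ((Γ * ((q : H →L[ℂ] H)) * Γ) v)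
          = (Q * (Γ * ((q : H →L[ℂ] H)) * Γ)) v := rfl
      _ = 0 := by rw [lemB q q.2]; rfl
    simp only [h5] at h1
    exact h1.unique hasSum_zero
  have hQ'Q : Q' * Q = 0 := by rw [← hcomm Q hQmem Q' hQ'mem, hQQ']
  have lemD : ∀ q' ∈ m, Q' * q' = 0 := by
    intro q' hq'
    have h1 : Q' * q' = Γ * (Q * (Γ * q' * Γ)) * Γ := by
      rw [hα_mul, hα_invol, hQ'def]
    rw [h1, lemB q' hq', hα_zero]
  have lemE : ∀ q' ∈ m, Q' * (Γ * q' * Γ) = Γ * q' * Γ := by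
    intro q' hq'
    have h1 : Q' * (Γ * q' * Γ) = Γ * (Q * q') * Γ := by
      rw [hα_mul, hQ'def]
    rw [h1, lemA q' hq']
  -- the projection P
  set P : H →L[ℂ] H := 1 - Q - Q' with hPdef
  have hPmem : P ∈ R := sub_mem (sub_mem (one_mem R) hQmem) hQ'mem
  have hPsa : star P = P := by rw [hPdef]; simp [star_sub, hQsa, hQ'sa]
  have hPid : P * P = P := by
    have h1 : P * P = 1 - Q - Q' - Q + (Q * Q + Q * Q') - Q' + (Q' * Q + Q' * Q') := by
      rw [hPdef]; noncomm_ring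
    rw [h1, hQid, hQ'id, hQQ', hQ'Q]
    rw [hPdef]; abel
  have hPq : ∀ q' ∈ m, P * q' = 0 := by
    intro q' hq'
    rw [hPdef, sub_mul, sub_mul, one_mul, lemA q' hq', lemD q' hq']
    abel
  have hPαq : ∀ q' ∈ m, P * (Γ * q' * Γ) = 0 := by
    intro q' hq'
    rw [hPdef, sub_mul, sub_mul, one_mul, lemB q' hq', lemE q' hq']
    abel
  refine ⟨P, hPmem, ⟨hPid, hPsa⟩, ?_, Q, hQmem, ⟨hQid, hQsa⟩, by rw [hPdef, ← hQ'def]; abel⟩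
  -- the main claim: projections under P are even
  intro q₀ hq₀mem ⟨hq₀id, hq₀sa⟩ ⟨hsub1, hsub2⟩
  by_contra hne
  set b : H →L[ℂ] H := Γ * q₀ * Γ with hbdef
  have hbmem : b ∈ R := hinv q₀ hq₀mem
  have hbsa : star b = b := hα_star q₀ hq₀sa
  have hbid : b * b = b := by rw [hbdef, ← hα_mul, hq₀id]
  have hab : q₀ * b = b * q₀ := hcomm q₀ hq₀mem b hbmem
  set r : H →L[ℂ] H := q₀ - q₀ * b with hrdef
  have hrmem : r ∈ R := sub_mem hq₀mem (mul_mem hq₀mem hbmem)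
  have hrsa : star r = r := by
    rw [hrdef, star_sub, star_mul, hbsa, hq₀sa, ← hab]
  have hrid : r * r = r := aux_idem_diff hq₀id hbid hab
  have hαb : Γ * b * Γ = q₀ := hα_invol q₀
  have hαr : Γ * r * Γ = b - q₀ * b := by
    rw [hrdef]
    have h1 : Γ * (q₀ - q₀ * b) * Γ = Γ * q₀ * Γ - Γ * (q₀ * b) * Γ := by noncomm_ring
    rw [h1, hα_mul, hαb, ← hbdef, ← hab]
  have hrαr : r * (Γ * r * Γ) = 0 := by
    rw [hαr, hrdef]
    exact aux_idem_diff2 hq₀id hbid hab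
  have hrne : r ≠ 0 := by
    intro hr0
    have h1 : q₀ * b = q₀ := by
      have := hr0
      rw [hrdef, sub_eq_zero] at this
      exact this.symm
    have h2 : b - q₀ * b = 0 := by
      rw [← hαr, hr0, hα_zero]
    rw [h1, sub_eq_zero] at h2
    exact hne h2
  have hrP : r * P = r := by
    have hbP : b * P = P * b := hcomm b hbmem P hPmem
    rw [hrdef, sub_mul, hsub1, mul_assoc, hbP, ← mul_assoc, hsub1]
  have hrq : ∀ q' ∈ m, r * q' = 0 := by
    intro q' hq'
    rw [← hrP, mul_assoc, hPq q' hq', mul_zero]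
  have hrαq : ∀ q' ∈ m, r * (Γ * q' * Γ) = 0 := by
    intro q' hq'
    rw [← hrP, mul_assoc, hPαq q' hq', mul_zero]
  -- insert r into the family
  have hins : insert r m ∈ 𝒜 := by
    refine ⟨?_, ?_, ?_, ?_⟩
    · rintro q (rfl | hq)
      · exact hrmem
      · exact hmR hq
    · rintro q (rfl | hq)
      · exact ⟨hrid, hrsa⟩
      · exact hmproj q hq
    · rintro q (rfl | hq) q' (rfl | hq')
      · exact hrαr
      · exact hrαq q' hq'
      · -- q ∈ m, q' = r
        have h1 : (Γ * r * Γ) * q = 0 := by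
          have h2 := hα_mul r (Γ * q * Γ)
          rw [hα_invol q] at h2
          rw [hrαq q hq, hα_zero] at h2
          exact h2.symm
        have h3 : star ((Γ * r * Γ) * q) = q * (Γ * r * Γ) := by
          rw [star_mul, (hmproj q hq).2, hα_star r hrsa]
        rw [← h3, h1, star_zero]
      · exact hmort q hq q' hq'
    · rintro q (rfl | hq) q' (rfl | hq') hne'
      · exact absurd rfl hne'
      · exact hrq q' hq'
      · -- q ∈ m, q' = r
        have h1 : star (r * q) = q * r := by
          rw [star_mul, (hmproj q hq).2, hrsa]
        rw [← h1, hrq q hq, star_zero]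
      · exact hmort' q hq q' hq' hne'
  have hrm : r ∈ m := hmax.2 hins (Set.subset_insert r m) (Set.mem_insert r m)
  have h1 : P * r = 0 := hPq r hrm
  have h2 : r * P = 0 := by
    have h3 : star (P * r) = r * P := by rw [star_mul, hPsa, hrsa]
    rw [← h3, h1, star_zero]
  exact hrne (by rw [← hrP, h2])
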